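/- The bipartite-type directed graph G with vertices {V_0, V_1, ..., V_n} (n even), edges from each vertex of S_2 = {V_{n/2+1},...,V_n} to each vertex of S_1 = {V_1,...,V_{n/2}}, and edges from each vertex of S_1 to V_0, has exactly n²/4 + n/2 edges, and every edge of G is identifiable from path-blocking relations: for each edge V_i → V_j, either β(V_i) = ∅ (when j = 0), or there is a minimal blocking set of V_i to V_0 containing V_j and no minimal blocking set omitting V_j fails to block V_j to V_0. -/

import Mathlib

namespace GRN

variable {V : Type*}

/-- `p` is a vertex-simple directed path from `i` to `j` in the directed graph `E`. -/
def IsPath (E : V → V → Prop) (i j : V) (p : List V) : Prop :=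
  p.head? = some i ∧ p.getLast? = some j ∧ p.Chain' E ∧ p.Nodup

/-- `S` blocks `i` to `j`: every vertex-simple directed path from `i` to `j` meets `S`. -/
def Blocks (E : V → V → Prop) (S : Set V) (i j : V) : Prop :=
  ∀ p : List V, IsPath E i j p → ∃ v ∈ p, v ∈ S

/-- `S` is a minimal blocking set of `i` to `v0`. -/
def IsMinBlock (E : V → V → Prop) (v0 i : V) (S : Set V) : Prop :=
  S ⊆ ({v0, i} : Set V)ᶜ ∧ Blocks E S i v0 ∧ ∀ T : Set V, T ⊂ S → ¬ Blocks E T i v0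

/-- `v0` has no outgoing edges. -/
def Sink (E : V → V → Prop) (v0 : V) : Prop := ∀ w, ¬ E v0 w

/-- every other vertex has a directed path to `v0`. -/
def ReachAll (E : V → V → Prop) (v0 : V) : Prop :=
  ∀ i, i ≠ v0 → Relation.TransGen E i v0

end GRN

/-- Any path from `a` to `z` with `a ≠ z` contains a vertex with an edge into `z`. -/
lemma aux_last_edge {V : Type*} {E : V → V → Prop} {a z : V} {p : List V}
    (hp : GRN.IsPath E a z p) (haz : a ≠ z) : ∃ c ∈ p, E c z := by
  obtain ⟨h1, h2, h3, -⟩ := hp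
  obtain ⟨q, rfl⟩ := List.getLast?_eq_some_iff.mp h2
  rcases q.eq_nil_or_concat with rfl | ⟨r, c, rfl⟩
  · simp at h1
    exact absurd h1.symm haz
  · rw [show List.Chain' E _ ↔ List.IsChain E _ from Iff.rfl, List.isChain_append] at h3
    refine ⟨c, by simp, h3.2.2 c ?_ z rfl⟩
    simp

lemma aux_count (m : ℕ) (hm : 1 ≤ m) :
    {p : Fin (2 * m + 1) × Fin (2 * m + 1) |
      (m + 1 ≤ (p.1 : ℕ) ∧ 1 ≤ (p.2 : ℕ) ∧ (p.2 : ℕ) ≤ m) ∨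
      (1 ≤ (p.1 : ℕ) ∧ (p.1 : ℕ) ≤ m ∧ p.2 = 0)}.ncard = m ^ 2 + m := by
  classical
  rw [Set.ncard_eq_toFinset_card', Set.toFinset_setOf]
  have h1 : (Finset.univ.filter (fun a : Fin (2*m+1) => m+1 ≤ (a:ℕ)))
      = Finset.Ici (⟨m+1, by omega⟩ : Fin (2*m+1)) := by
    ext a; simp [Fin.le_def]
  have h2 : (Finset.univ.filter (fun b : Fin (2*m+1) => 1 ≤ (b:ℕ) ∧ (b:ℕ) ≤ m))
      = Finset.Icc (⟨1, by omega⟩ : Fin (2*m+1)) ⟨m, by omega⟩ := by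
    ext a; simp [Fin.le_def]
  rw [Finset.filter_or, Finset.card_union_of_disjoint]
  · have e1 : (Finset.univ.filter (fun p : Fin (2*m+1) × Fin (2*m+1) =>
        m + 1 ≤ (p.1 : ℕ) ∧ 1 ≤ (p.2 : ℕ) ∧ (p.2 : ℕ) ≤ m))
        = (Finset.univ.filter (fun a : Fin (2*m+1) => m+1 ≤ (a:ℕ))) ×ˢ
          (Finset.univ.filter (fun b : Fin (2*m+1) => 1 ≤ (b:ℕ) ∧ (b:ℕ) ≤ m)) := by
      rw [← Finset.filter_product, Finset.univ_product_univ]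
    have e2 : (Finset.univ.filter (fun p : Fin (2*m+1) × Fin (2*m+1) =>
        1 ≤ (p.1 : ℕ) ∧ (p.1 : ℕ) ≤ m ∧ p.2 = 0))
        = (Finset.univ.filter (fun a : Fin (2*m+1) => 1 ≤ (a:ℕ) ∧ (a:ℕ) ≤ m)) ×ˢ
          (Finset.univ.filter (fun b : Fin (2*m+1) => b = 0)) := by
      rw [← Finset.filter_product, Finset.univ_product_univ]
      congr 1; ext p; tauto
    rw [e1, e2, Finset.card_product, Finset.card_product, h1, h2, Fin.card_Ici, Fin.card_Icc,
      Finset.filter_eq', if_pos (Finset.mem_univ _), Finset.card_singleton]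
    simp only [Fin.val_mk]
    rw [show 2*m+1-(m+1) = m from by omega, show m+1-1 = m from by omega]
    ring
  · rw [Finset.disjoint_filter]
    rintro p - ⟨-, h1, -⟩ ⟨-, -, h0⟩
    rw [h0] at h1; simp at h1

lemma aux_ident (m : ℕ) (hm : 1 ≤ m) :
    ∀ a b : Fin (2 * m + 1),
      (fun a b : Fin (2 * m + 1) =>
        (m + 1 ≤ (a : ℕ) ∧ 1 ≤ (b : ℕ) ∧ (b : ℕ) ≤ m) ∨
        (1 ≤ (a : ℕ) ∧ (a : ℕ) ≤ m ∧ b = 0)) a b →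
      (b = 0 → ¬ ∃ S : Set (Fin (2 * m + 1)), GRN.IsMinBlock (fun a b : Fin (2 * m + 1) =>
        (m + 1 ≤ (a : ℕ) ∧ 1 ≤ (b : ℕ) ∧ (b : ℕ) ≤ m) ∨
        (1 ≤ (a : ℕ) ∧ (a : ℕ) ≤ m ∧ b = 0)) 0 a S) ∧
      (b ≠ 0 →
        (∃ S : Set (Fin (2 * m + 1)), GRN.IsMinBlock (fun a b : Fin (2 * m + 1) =>
          (m + 1 ≤ (a : ℕ) ∧ 1 ≤ (b : ℕ) ∧ (b : ℕ) ≤ m) ∨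
          (1 ≤ (a : ℕ) ∧ (a : ℕ) ≤ m ∧ b = 0)) 0 a S ∧ b ∈ S) ∧
        (∀ S : Set (Fin (2 * m + 1)), GRN.IsMinBlock (fun a b : Fin (2 * m + 1) =>
          (m + 1 ≤ (a : ℕ) ∧ 1 ≤ (b : ℕ) ∧ (b : ℕ) ≤ m) ∨
          (1 ≤ (a : ℕ) ∧ (a : ℕ) ≤ m ∧ b = 0)) 0 a S → b ∉ S →
          GRN.Blocks (fun a b : Fin (2 * m + 1) =>
            (m + 1 ≤ (a : ℕ) ∧ 1 ≤ (b : ℕ) ∧ (b : ℕ) ≤ m) ∨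
            (1 ≤ (a : ℕ) ∧ (a : ℕ) ≤ m ∧ b = 0)) S b 0)) := by
  set E : Fin (2 * m + 1) → Fin (2 * m + 1) → Prop := fun a b =>
      (m + 1 ≤ (a : ℕ) ∧ 1 ≤ (b : ℕ) ∧ (b : ℕ) ≤ m) ∨
      (1 ≤ (a : ℕ) ∧ (a : ℕ) ≤ m ∧ b = 0) with hE
  intro a b hab
  constructor
  · rintro rfl ⟨S, hsub, hblock, -⟩
    have ha : 1 ≤ (a:ℕ) ∧ (a:ℕ) ≤ m := by
      rcases hab with ⟨-, h, -⟩ | ⟨h1, h2, -⟩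
      · simp at h
      · exact ⟨h1, h2⟩
    have ha0 : a ≠ 0 := by
      intro h; rw [h] at ha; simp at ha
    obtain ⟨v, hv, hvS⟩ := hblock [a, 0] ⟨rfl, rfl,
      List.isChain_cons_cons.mpr ⟨Or.inr ⟨ha.1, ha.2, rfl⟩, List.isChain_singleton _⟩,
      by simp [ha0]⟩
    simp only [List.mem_cons, List.not_mem_nil, or_false] at hv
    rcases hv with rfl | rfl
    · exact hsub hvS (by simp)
    · exact hsub hvS (by simp)
  · intro hb0
    have hedge : m + 1 ≤ (a:ℕ) ∧ 1 ≤ (b:ℕ) ∧ (b:ℕ) ≤ m := by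
      rcases hab with h | ⟨-, -, h⟩
      · exact h
      · exact absurd h hb0
    have ha0 : a ≠ 0 := by
      intro h
      have := hedge.1; rw [h] at this; simp at this
    have hEc0 : ∀ c : Fin (2*m+1), E c 0 → 1 ≤ (c:ℕ) ∧ (c:ℕ) ≤ m := by
      intro c hc
      rcases hc with ⟨-, h, -⟩ | ⟨h1, h2, -⟩
      · simp at h
      · exact ⟨h1, h2⟩
    constructor
    · refine ⟨{x | 1 ≤ (x:ℕ) ∧ (x:ℕ) ≤ m}, ⟨?_, ?_, ?_⟩, hedge.2.1, hedge.2.2⟩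
      · intro x hx
        simp only [Set.mem_compl_iff, Set.mem_insert_iff, Set.mem_singleton_iff]
        rintro (rfl | rfl)
        · simp at hx
        · obtain ⟨-, h2⟩ := hx; omega
      · intro p hp
        obtain ⟨c, hc, hcE⟩ := aux_last_edge hp ha0
        exact ⟨c, hc, hEc0 c hcE⟩
      · intro T hT hTblock
        obtain ⟨c, hcS, hcT⟩ := Set.exists_of_ssubset hT
        have hTsub := hT.subset
        have hnodup : ([a, c, 0] : List (Fin (2*m+1))).Nodup := by
          have h1 := hedge.1
          have h2 := hcS.1
          have h3 := hcS.2
          have h0 : ((0 : Fin (2*m+1)) : ℕ) = 0 := rfl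
          simp only [List.nodup_cons, List.mem_cons, List.not_mem_nil, Fin.ext_iff, h0, List.nodup_nil, or_false, not_false_eq_true, and_true]
          omega
        obtain ⟨v, hv, hvT⟩ := hTblock [a, c, 0] ⟨rfl, rfl,
          List.isChain_cons_cons.mpr ⟨Or.inl ⟨hedge.1, hcS.1, hcS.2⟩,
            List.isChain_cons_cons.mpr ⟨Or.inr ⟨hcS.1, hcS.2, rfl⟩, List.isChain_singleton _⟩⟩,
          hnodup⟩
        have hvS := hTsub hvT
        simp only [List.mem_cons, List.not_mem_nil, or_false] at hv
        rcases hv with rfl | rfl | rfl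
        · simp at hvS; omega
        · exact hcT hvT
        · simp at hvS
    · intro S hS hbS
      exfalso
      apply hbS
      have hnodup : ([a, b, 0] : List (Fin (2*m+1))).Nodup := by
        have h1 := hedge.1
        have h2 := hedge.2.1
        have h3 := hedge.2.2
        have h0 : ((0 : Fin (2*m+1)) : ℕ) = 0 := rfl
        simp only [List.nodup_cons, List.mem_cons, List.not_mem_nil, Fin.ext_iff, h0, List.nodup_nil, or_false, not_false_eq_true, and_true]
        omega
      obtain ⟨v, hv, hvS⟩ := hS.2.1 [a, b, 0] ⟨rfl, rfl,
        List.isChain_cons_cons.mpr ⟨hab,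
          List.isChain_cons_cons.mpr ⟨Or.inr ⟨hedge.2.1, hedge.2.2, rfl⟩, List.isChain_singleton _⟩⟩,
        hnodup⟩
      simp only [List.mem_cons, List.not_mem_nil, or_false] at hv
      have hvc := hS.1 hvS
      simp only [Set.mem_compl_iff, Set.mem_insert_iff, Set.mem_singleton_iff, not_or] at hvc
      rcases hv with rfl | rfl | rfl
      · exact absurd rfl hvc.2
      · exact hvS
      · exact absurd rfl hvc.1

open GRN in
theorem stmt_16 (m : ℕ) (hm : 1 ≤ m) :
    letI E : Fin (2 * m + 1) → Fin (2 * m + 1) → Prop := fun a b =>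
      (m + 1 ≤ (a : ℕ) ∧ 1 ≤ (b : ℕ) ∧ (b : ℕ) ≤ m) ∨
      (1 ≤ (a : ℕ) ∧ (a : ℕ) ≤ m ∧ b = 0)
    {p : Fin (2 * m + 1) × Fin (2 * m + 1) | E p.1 p.2}.ncard = m ^ 2 + m ∧
    ∀ a b : Fin (2 * m + 1), E a b →
      (b = 0 → ¬ ∃ S : Set (Fin (2 * m + 1)), IsMinBlock E 0 a S) ∧
      (b ≠ 0 →
        (∃ S : Set (Fin (2 * m + 1)), IsMinBlock E 0 a S ∧ b ∈ S) ∧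
        (∀ S : Set (Fin (2 * m + 1)), IsMinBlock E 0 a S → b ∉ S → Blocks E S b 0)) :=
  ⟨aux_count m hm, aux_ident m hm⟩
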